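/- arXiv:2503.14019 — 4 statements merged into one kernel-verified Lean document; each statement's English description precedes it below -/
import Mathlib

section
/- Let p and q be real numbers with 1 ≤ q ≤ p < ∞. For all a, b, c, d ∈ [0, ∞] (the extended nonnegative reals), one has (a +_q b) +_p (c +_q d) ≤ (a +_p c) +_q (b +_p d), where x +_r y denotes (x^r + y^r)^{1/r}. Consequently ([0,∞], ≤, +_p, +_q, 0) is a symmetric duoidal lattice. -/
open CategoryTheory

/-- A symmetric monoidal lattice `(L, ≤, ⊗, e)`: a complete lattice equipped with a
commutative monoid structure whose product is monotone in each argument and whose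
unit is the bottom element `e = ⊥`. -/
structure SML (L : Type) [CompleteLattice L] where
  mul : L → L → L
  mul_comm : ∀ a b, mul a b = mul b a
  mul_assoc : ∀ a b c, mul (mul a b) c = mul a (mul b c)
  mul_bot : ∀ a, mul a ⊥ = a
  mul_mono : ∀ ⦃a a' b b'⦄, a ≤ a' → b ≤ b' → mul a b ≤ mul a' b'

namespace SML

variable {L : Type} [CompleteLattice L]

lemma le_mul (M : SML L) (a b : L) : a ≤ M.mul a b := by
  have h := M.mul_mono (le_refl a) (bot_le (a := b))
  rwa [M.mul_bot] at h

/-- The `k`-fold product `t^{⊗k}`. -/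
def pow (M : SML L) (t : L) : ℕ → L
  | 0 => ⊥
  | k + 1 => M.mul t (M.pow t k)

/-- The left adjoint `λ_t(s) = inf {c : s ≤ t ⊗ c}` of `c ↦ t ⊗ c`. -/
def lam (M : SML L) (t s : L) : L := sInf {c : L | s ≤ M.mul t c}

/-- For every `t`, the map `c ↦ t ⊗ c` preserves arbitrary infima. -/
def InfPreserving (M : SML L) : Prop :=
  ∀ (t : L) (S : Set L), M.mul t (sInf S) = ⨅ c ∈ S, M.mul t c

/-- Product of a list of lattice elements. -/
def prodList (M : SML L) : List L → L
  | [] => ⊥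
  | a :: l => M.mul a (M.prodList l)

end SML

/-- A symmetric duoidal lattice `(L, ≤, ⊗, ⊕, e)`: two symmetric monoidal lattice
structures `tmul = ⊗` and `omul = ⊕` on the same complete lattice, with the same unit
`e = ⊥`, satisfying the generalized Minkowski inequality
`(s ⊕ t) ⊗ (s' ⊕ t') ≤ (s ⊗ s') ⊕ (t ⊗ t')`. -/
structure SDL (L : Type) [CompleteLattice L] where
  tmul : SML L
  omul : SML L
  duoidal : ∀ s t s' t' : L,
    tmul.mul (omul.mul s t) (omul.mul s' t') ≤ omul.mul (tmul.mul s s') (tmul.mul t t')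

/-- The directed graph distance `δ⃗_⊕(G, G') = sup_{v,v'} λ_{G(v,v')}(G'(v,v'))`. -/
noncomputable def dirDist {L : Type} [CompleteLattice L] (M : SML L) {V : Type}
    (G G' : V → V → L) : L :=
  ⨆ v : V, ⨆ v' : V, M.lam (G v v') (G' v v')

/-- The graph distance `δ_⊕(G, G') = sup {δ⃗_⊕(G, G'), δ⃗_⊕(G', G)}`. -/
noncomputable def graphDist {L : Type} [CompleteLattice L] (M : SML L) {V : Type}
    (G G' : V → V → L) : L :=
  dirDist M G G' ⊔ dirDist M G' G

open scoped ENNReal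

/-- The `r`-sum `a +_r b = (a^r + b^r)^{1/r}` on the extended nonnegative reals `[0, ∞]`,
using extended-real powers. -/
noncomputable def psum (r : ℝ) (a b : ℝ≥0∞) : ℝ≥0∞ := (a ^ r + b ^ r) ^ (1 / r)

lemma psum_rpow_rpow_inv {r : ℝ} (hr : r ≠ 0) (x : ℝ≥0∞) : (x ^ r) ^ (1 / r) = x := by
  rw [← ENNReal.rpow_mul, mul_one_div, div_self hr, ENNReal.rpow_one]

lemma psum_rpow_inv_rpow {r : ℝ} (hr : r ≠ 0) (x : ℝ≥0∞) : (x ^ (1 / r)) ^ r = x := by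
  rw [← ENNReal.rpow_mul, one_div, inv_mul_cancel₀ hr, ENNReal.rpow_one]

lemma psum_minkowski {r : ℝ} (hr : 1 ≤ r) (x y z w : ℝ≥0∞) :
    psum r (x + y) (z + w) ≤ psum r x z + psum r y w := by
  have h := ENNReal.Lp_add_le (Finset.univ : Finset (Fin 2)) ![x, z] ![y, w] hr
  simpa [psum, Fin.sum_univ_two] using h

/-- Construction of the symmetric monoidal lattice structure from `psum r`. -/
noncomputable def psumSML (r : ℝ) (hr : 1 ≤ r) : SML ℝ≥0∞ where
  mul := psum r
  mul_comm := fun a b => by simp [psum, add_comm]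
  mul_assoc := fun a b c => by
    have hr0 : r ≠ 0 := by positivity
    simp only [psum, psum_rpow_inv_rpow hr0, add_assoc]
  mul_bot := fun a => by
    have hr0 : (0:ℝ) < r := by positivity
    show (a ^ r + (⊥ : ℝ≥0∞) ^ r) ^ (1 / r) = a
    rw [show ((⊥ : ℝ≥0∞)) = 0 from rfl, ENNReal.zero_rpow_of_pos hr0, add_zero,
      psum_rpow_rpow_inv hr0.ne']
  mul_mono := fun a a' b b' ha hb => by
    have hr0 : (0:ℝ) ≤ r := by positivity
    exact ENNReal.rpow_le_rpow
      (add_le_add (ENNReal.rpow_le_rpow ha hr0) (ENNReal.rpow_le_rpow hb hr0))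
      (by positivity)

/-- For real numbers `1 ≤ q ≤ p < ∞` and all `a, b, c, d ∈ [0, ∞]`,
`(a +_q b) +_p (c +_q d) ≤ (a +_p c) +_q (b +_p d)`; consequently
`([0,∞], ≤, +_p, +_q, 0)` is a symmetric duoidal lattice. -/
theorem psum_duoidal (p q : ℝ) (hq : 1 ≤ q) (hqp : q ≤ p) :
    (∀ a b c d : ℝ≥0∞, psum p (psum q a b) (psum q c d) ≤ psum q (psum p a c) (psum p b d)) ∧
    (∃ D : SDL ℝ≥0∞, (∀ a b : ℝ≥0∞, D.tmul.mul a b = psum p a b) ∧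
      ∀ a b : ℝ≥0∞, D.omul.mul a b = psum q a b) := by
  have hq0 : (0:ℝ) < q := lt_of_lt_of_le one_pos hq
  have hp0 : (0:ℝ) < p := lt_of_lt_of_le hq0 hqp
  have hp : 1 ≤ p := le_trans hq hqp
  set r : ℝ := p / q with hr_def
  have hr : 1 ≤ r := (one_le_div hq0).2 hqp
  have hr0 : (0:ℝ) < r := lt_of_lt_of_le one_pos hr
  have hqr : q * r = p := by rw [hr_def]; field_simp
  have main : ∀ a b c d : ℝ≥0∞,
      psum p (psum q a b) (psum q c d) ≤ psum q (psum p a c) (psum p b d) := by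
    intro a b c d
    have e1 : 1 / q * p = r := by rw [hr_def]; ring
    have e2 : (1 : ℝ) / r * (1 / q) = 1 / p := by
      rw [hr_def]; field_simp
    have e3 : (1 : ℝ) / p * q = 1 / r := by
      rw [hr_def]; field_simp
    have h1 : psum p (psum q a b) (psum q c d)
        = (psum r (a ^ q + b ^ q) (c ^ q + d ^ q)) ^ (1 / q) := by
      simp only [psum, ← ENNReal.rpow_mul, e1, e2]
    have h2 : psum q (psum p a c) (psum p b d)
        = (psum r (a ^ q) (c ^ q) + psum r (b ^ q) (d ^ q)) ^ (1 / q) := by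
      simp only [psum, ← ENNReal.rpow_mul, e3, hqr]
    rw [h1, h2]
    exact ENNReal.rpow_le_rpow (psum_minkowski hr _ _ _ _) (by positivity)
  refine ⟨main, ⟨⟨psumSML p hp, psumSML q hq, ?_⟩, fun a b => rfl, fun a b => rfl⟩⟩
  intro s t s' t'
  exact main s t s' t'
end

section
/- Let (L, ≤, ⊗, ⊕, e) be a symmetric duoidal lattice such that for every t ∈ L the map c ↦ t ⊕ c preserves arbitrary infima, and let G, G' : V × V → L be L-graphs on a finite set V. Then for every n ≥ 0 the monoidal Rips persistence modules H_n(R^•_⊗(G)) and H_n(R^•_⊗(G')) are (δ⃗_⊕(G, G')^{⊗(n+1)}, δ⃗_⊕(G', G)^{⊗(n+1)})-interleaved with respect to ⊕, the interleaving maps being induced by the inclusions of (n+1)-skeleta R^t_⊗(G) ⊆ R^{t ⊕ δ⃗_⊕(G,G')^{⊗(n+1)}}_⊗(G') and R^t_⊗(G') ⊆ R^{t ⊕ δ⃗_⊕(G',G)^{⊗(n+1)}}_⊗(G). -/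
open CategoryTheory

/-- The weight `𝓛^G_⊗(y)` of a tuple `y = (v₀, …, v_n)`: it is `G(v₀, v₀)` if all
entries are equal, and otherwise the `⊗`-product of `G(v_{i-1}, v_i)` over all `i`
with `v_{i-1} ≠ v_i`. -/
def weight {L : Type} [CompleteLattice L] (M : SML L) {V : Type} [DecidableEq V]
    (G : V → V → L) {n : ℕ} (y : Fin (n + 1) → V) : L :=
  if ∀ i, y i = y 0 then G (y 0) (y 0)
  else M.prodList (((List.finRange n).filter fun i => y i.castSucc ≠ y i.succ).map
    fun i => G (y i.castSucc) (y i.succ))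

/-- Membership of a tuple `y ∈ V^{n+1}` in the monoidal Rips complex `R^t_⊗(G)` in
dimension `n`: the weight of every face `α*y`, for `α : [m] → [n]` order-preserving,
is at most `t`. -/
def memRips {L : Type} [CompleteLattice L] (M : SML L) {V : Type} [DecidableEq V]
    (G : V → V → L) (t : L) {n : ℕ} (y : Fin (n + 1) → V) : Prop :=
  ∀ (m : ℕ) (α : Fin (m + 1) → Fin (n + 1)), Monotone α → weight M G (y ∘ α) ≤ t

/-- The monoidal Rips complex `R^t_⊗(G)` as a simplicial set (a simplicial subset of
the singular `V`-simplex `EV`). -/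
def RipsSSet {L : Type} [CompleteLattice L] (M : SML L) {V : Type} [DecidableEq V]
    (G : V → V → L) (t : L) : SSet.{0} where
  obj k := { y : Fin (k.unop.len + 1) → V // memRips M G t y }
  map {k k'} α := TypeCat.ofHom fun y => ⟨y.1 ∘ α.unop.toOrderHom, fun m β hβ =>
    y.2 m (α.unop.toOrderHom ∘ β) (α.unop.toOrderHom.monotone.comp hβ)⟩

/-- The monoidal Rips filtration `R^•_⊗(G)`, as a functor from the lattice `L`
(viewed as a category) to simplicial sets; the maps are the inclusions. -/
def ripsFunctor {L : Type} [CompleteLattice L] (M : SML L) {V : Type} [DecidableEq V]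
    (G : V → V → L) : L ⥤ SSet.{0} where
  obj t := RipsSSet M G t
  map {s t} h :=
    { app := fun k => TypeCat.ofHom fun y => ⟨y.1, fun m α hα => le_trans (y.2 m α hα) (leOfHom h)⟩ }

/-- The `n`-th homology with coefficients in a field `K` of a simplicial set, namely the
`n`-th homology of the alternating face map complex of the levelwise free `K`-vector
space on its simplices. -/
noncomputable def homFunctor (K : Type) [Field K] (n : ℕ) : SSet.{0} ⥤ ModuleCat.{0} K :=
  (SimplicialObject.whiskering (Type) (ModuleCat.{0} K)).obj (ModuleCat.free K) ⋙
    AlgebraicTopology.alternatingFaceMapComplex (ModuleCat.{0} K) ⋙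
    HomologicalComplex.homologyFunctor _ _ n

/-- The monoidal Rips persistence module `H_n(R^•_⊗(G))` with coefficients in `K`. -/
noncomputable def ripsPersistence (K : Type) [Field K] {L : Type} [CompleteLattice L]
    (M : SML L) {V : Type} [DecidableEq V] (G : V → V → L) (n : ℕ) : L ⥤ ModuleCat.{0} K :=
  ripsFunctor M G ⋙ homFunctor K n

/-- `H` and `H'` are `(δ, ε)`-interleaved with respect to the monoidal product of `M`:
there exist natural families `F_t : H_t → H'_{t ⊕ δ}` and `G_t : H'_t → H_{t ⊕ ε}`
whose composites are the corresponding structure maps. -/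
def Interleaved {L : Type} [CompleteLattice L] (M : SML L) {K : Type} [Field K]
    (H H' : L ⥤ ModuleCat.{0} K) (δ ε : L) : Prop :=
  ∃ (F : ∀ t : L, H.obj t ⟶ H'.obj (M.mul t δ)) (G : ∀ t : L, H'.obj t ⟶ H.obj (M.mul t ε)),
    (∀ (s t : L) (h : s ≤ t),
      H.map (homOfLE h) ≫ F t = F s ≫ H'.map (homOfLE (M.mul_mono h (le_refl δ)))) ∧
    (∀ (s t : L) (h : s ≤ t),
      H'.map (homOfLE h) ≫ G t = G s ≫ H.map (homOfLE (M.mul_mono h (le_refl ε)))) ∧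
    (∀ t : L, F t ≫ G (M.mul t δ) = H.map (homOfLE ((M.le_mul t δ).trans (M.le_mul _ ε)))) ∧
    (∀ t : L, G t ≫ F (M.mul t ε) = H'.map (homOfLE ((M.le_mul t ε).trans (M.le_mul _ δ))))

/-! ### Auxiliary material for the stability theorem -/

namespace StabilityAux

open AlgebraicTopology

variable {L : Type} [CompleteLattice L]

/-! #### Lattice-theoretic lemmas -/

lemma le_mul_lam (M : SML L) (hinf : M.InfPreserving) (t s : L) :
    s ≤ M.mul t (M.lam t s) := by
  rw [SML.lam, hinf t _]
  exact le_iInf₂ fun c hc => hc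

lemma le_omul_dirDist (D : SDL L) (hinf : D.omul.InfPreserving) {V : Type}
    (G G' : V → V → L) (v v' : V) :
    G' v v' ≤ D.omul.mul (G v v') (dirDist D.omul G G') :=
  (le_mul_lam D.omul hinf _ _).trans
    (D.omul.mul_mono le_rfl (le_iSup_of_le v (le_iSup_of_le v' le_rfl)))

lemma pow_mono (M : SML L) (t : L) : Monotone (M.pow t) :=
  monotone_nat_of_le_succ fun k =>
    (M.le_mul (M.pow t k) t).trans_eq (M.mul_comm _ _)

lemma le_pow (M : SML L) (t : L) {N : ℕ} (hN : 1 ≤ N) : t ≤ M.pow t N := by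
  have h1 : M.pow t 1 = t := M.mul_bot t
  exact h1.symm.trans_le (pow_mono M t hN)

lemma prodList_le_prodList (M : SML L) {ι : Type} :
    ∀ (l : List ι) (f g : ι → L), (∀ i ∈ l, f i ≤ g i) →
      M.prodList (l.map f) ≤ M.prodList (l.map g)
  | [], _, _, _ => le_rfl
  | a :: l, f, g, h =>
      M.mul_mono (h a List.mem_cons_self)
        (prodList_le_prodList M l f g fun i hi => h i (List.mem_cons_of_mem a hi))

lemma prodList_duoidal (D : SDL L) {ι : Type} (d : L) :
    ∀ (l : List ι) (f : ι → L),
      D.tmul.prodList (l.map fun a => D.omul.mul (f a) d) ≤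
        D.omul.mul (D.tmul.prodList (l.map f)) (D.tmul.pow d l.length)
  | [], _ => bot_le
  | a :: l, f =>
      le_trans (D.tmul.mul_mono le_rfl (prodList_duoidal D d l f))
        (D.duoidal (f a) d (D.tmul.prodList (l.map f)) (D.tmul.pow d l.length))

/-! #### Counting edges of a face -/

lemma edges_le {V : Type} [DecidableEq V] {m' m : ℕ} (β : Fin (m' + 1) → Fin (m + 1))
    (hβ : Monotone β) (z : Fin (m' + 1) → V)
    (hz : ∀ i : Fin m', z i.castSucc ≠ z i.succ → β i.castSucc ≠ β i.succ) :
    ((List.finRange m').filter fun i => z i.castSucc ≠ z i.succ).length ≤ m := by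
  classical
  set l := (List.finRange m').filter fun i => z i.castSucc ≠ z i.succ with hl
  have hnd : l.Nodup := (List.nodup_finRange m').filter _
  have hmem : ∀ i ∈ l.toFinset, β i.castSucc < β i.succ := by
    intro i hi
    have hi' : i ∈ l := List.mem_toFinset.mp hi
    have hd := List.of_mem_filter hi'
    have hne : z i.castSucc ≠ z i.succ := of_decide_eq_true hd
    exact lt_of_le_of_ne (hβ (show i.castSucc < i.succ from Fin.castSucc_lt_succ).le) (hz i hne)
  have hlt : ∀ i ∈ l.toFinset, ∀ j ∈ l.toFinset, i < j → β i.succ < β j.succ := by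
    intro i _ j hj hij
    exact lt_of_le_of_lt (hβ (Fin.succ_le_castSucc_iff.mpr hij)) (hmem j hj)
  have hmaps : ∀ i ∈ l.toFinset,
      β i.succ ∈ (Finset.univ.erase (0 : Fin (m + 1))) := by
    intro i hi
    refine Finset.mem_erase.mpr ⟨?_, Finset.mem_univ _⟩
    have h0 : (0 : Fin (m + 1)) < β i.succ := (Fin.zero_le (β i.castSucc)).trans_lt (hmem i hi)
    exact ne_of_gt h0
  have hinj : Set.InjOn (fun i : Fin m' => β i.succ) l.toFinset := by
    intro i hi j hj hij
    by_contra hne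
    rcases Ne.lt_or_gt hne with h | h
    · exact absurd hij (ne_of_lt (hlt i hi j hj h))
    · exact absurd hij.symm (ne_of_lt (hlt j hj i hi h))
  have hcard : l.toFinset.card ≤ (Finset.univ.erase (0 : Fin (m + 1))).card :=
    Finset.card_le_card_of_injOn _ hmaps hinj
  rw [Finset.card_erase_of_mem (Finset.mem_univ _), Finset.card_univ,
    Fintype.card_fin] at hcard
  have := List.toFinset_card_of_nodup hnd
  omega

/-! #### The weight comparison -/

lemma weight_le (D : SDL L) (hinf : D.omul.InfPreserving) {V : Type} [DecidableEq V]
    (G G' : V → V → L) {m : ℕ} (z : Fin (m + 1) → V) {N : ℕ} (hN : 1 ≤ N)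
    (hE : ((List.finRange m).filter fun i => z i.castSucc ≠ z i.succ).length ≤ N) :
    weight D.tmul G' z ≤
      D.omul.mul (weight D.tmul G z) (D.tmul.pow (dirDist D.omul G G') N) := by
  by_cases hall : ∀ i, z i = z 0
  · simp only [weight]
    rw [if_pos hall, if_pos hall]
    exact (le_omul_dirDist D hinf G G' _ _).trans
      (D.omul.mul_mono le_rfl (le_pow D.tmul _ hN))
  · simp only [weight]
    rw [if_neg hall, if_neg hall]
    refine le_trans (prodList_le_prodList D.tmul
      ((List.finRange m).filter fun i => z i.castSucc ≠ z i.succ)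
      (fun i : Fin m => G' (z i.castSucc) (z i.succ))
      (fun i : Fin m => D.omul.mul (G (z i.castSucc) (z i.succ)) (dirDist D.omul G G'))
      fun i _ => le_omul_dirDist D hinf G G' (z i.castSucc) (z i.succ)) ?_
    refine le_trans (prodList_duoidal D (dirDist D.omul G G')
      ((List.finRange m).filter fun i => z i.castSucc ≠ z i.succ)
      (fun i : Fin m => G (z i.castSucc) (z i.succ))) ?_
    exact D.omul.mul_mono le_rfl (pow_mono D.tmul _ hE)

/-! #### The key inclusion lemma -/

lemma memRips_incl (D : SDL L) (hinf : D.omul.InfPreserving) {V : Type} [DecidableEq V]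
    (G G' : V → V → L) (t : L) {n m : ℕ} (hm : m ≤ n + 1) (y : Fin (m + 1) → V)
    (hy : memRips D.tmul G t y) :
    memRips D.tmul G' (D.omul.mul t (D.tmul.pow (dirDist D.omul G G') (n + 1))) y := by
  intro m' β hβ
  have hE : ((List.finRange m').filter fun i =>
      (y ∘ β) i.castSucc ≠ (y ∘ β) i.succ).length ≤ n + 1 :=
    le_trans (edges_le β hβ (y ∘ β) fun i hne hbe => hne (congrArg y hbe)) hm
  refine le_trans (weight_le D hinf G G' (y ∘ β) (Nat.succ_le_succ (Nat.zero_le n)) hE) ?_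
  exact D.omul.mul_mono (hy m' β hβ) le_rfl

/-! #### Categorical infrastructure -/

variable (K : Type) [Field K] {V : Type} [DecidableEq V]

/-- The chain complex of the Rips complex. -/
noncomputable abbrev CC (M : SML L) (G : V → V → L) (t : L) :
    ChainComplex (ModuleCat.{0} K) ℕ :=
  AlgebraicTopology.AlternatingFaceMapComplex.obj
    (((SimplicialObject.whiskering Type (ModuleCat.{0} K)).obj (ModuleCat.free K)).obj
      (RipsSSet M G t))

/-- Type-level inclusion of Rips complexes in a fixed simplicial degree. -/
def inclTy (M : SML L) (G₁ G₂ : V → V → L) (t₁ t₂ : L) (m : ℕ)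
    (h : ∀ y : Fin (m + 1) → V, memRips M G₁ t₁ y → memRips M G₂ t₂ y) :
    (RipsSSet M G₁ t₁).obj (Opposite.op (SimplexCategory.mk m)) ⟶
      (RipsSSet M G₂ t₂).obj (Opposite.op (SimplexCategory.mk m)) :=
  TypeCat.ofHom fun y => ⟨y.1, h y.1 y.2⟩

/-- Module-level inclusion. -/
noncomputable def inclMod (M : SML L) (G₁ G₂ : V → V → L) (t₁ t₂ : L) (m : ℕ)
    (h : ∀ y : Fin (m + 1) → V, memRips M G₁ t₁ y → memRips M G₂ t₂ y) :
    (CC K M G₁ t₁).X m ⟶ (CC K M G₂ t₂).X m :=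
  (ModuleCat.free K).map (inclTy M G₁ G₂ t₁ t₂ m h)

lemma d_incl (M : SML L) (G₁ G₂ : V → V → L) (t₁ t₂ : L) (i j : ℕ)
    (hi : ∀ y : Fin (i + 1) → V, memRips M G₁ t₁ y → memRips M G₂ t₂ y)
    (hj : ∀ y : Fin (j + 1) → V, memRips M G₁ t₁ y → memRips M G₂ t₂ y) :
    (CC K M G₁ t₁).d i j ≫ inclMod K M G₁ G₂ t₁ t₂ j hj =
      inclMod K M G₁ G₂ t₁ t₂ i hi ≫ (CC K M G₂ t₂).d i j := by
  by_cases hrel : j + 1 = i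
  · subst hrel
    rw [AlgebraicTopology.AlternatingFaceMapComplex.obj_d_eq,
      AlgebraicTopology.AlternatingFaceMapComplex.obj_d_eq,
      Preadditive.sum_comp, Preadditive.comp_sum]
    refine Finset.sum_congr rfl fun k _ => ?_
    rw [Preadditive.zsmul_comp, Preadditive.comp_zsmul]
    congr 1
    show (ModuleCat.free K).map ((RipsSSet M G₁ t₁).map (SimplexCategory.δ k).op) ≫
        (ModuleCat.free K).map (inclTy M G₁ G₂ t₁ t₂ j hj) =
      (ModuleCat.free K).map (inclTy M G₁ G₂ t₁ t₂ (j + 1) hi) ≫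
        (ModuleCat.free K).map ((RipsSSet M G₂ t₂).map (SimplexCategory.δ k).op)
    rw [← (ModuleCat.free K).map_comp, ← (ModuleCat.free K).map_comp]
    rfl
  · rw [(CC K M G₁ t₁).shape i j hrel, (CC K M G₂ t₂).shape i j hrel,
      Limits.zero_comp, Limits.comp_zero]

lemma inclMod_comp (M : SML L) (G₁ G₂ G₃ : V → V → L) (t₁ t₂ t₃ : L) (m : ℕ)
    (h₁ : ∀ y : Fin (m + 1) → V, memRips M G₁ t₁ y → memRips M G₂ t₂ y)
    (h₂ : ∀ y : Fin (m + 1) → V, memRips M G₂ t₂ y → memRips M G₃ t₃ y) :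
    inclMod K M G₁ G₂ t₁ t₂ m h₁ ≫ inclMod K M G₂ G₃ t₂ t₃ m h₂ =
      inclMod K M G₁ G₃ t₁ t₃ m (fun y hy => h₂ y (h₁ y hy)) := by
  rw [inclMod, inclMod, inclMod]
  exact ((ModuleCat.free K).map_comp _ _).symm

lemma next_le (n : ℕ) : (ComplexShape.down ℕ).next n ≤ n + 1 := by
  cases n with
  | zero => rw [ChainComplex.next_nat_zero]; omega
  | succ k => rw [ChainComplex.next_nat_succ]; omega

/-- The inclusion as a morphism of the degree-`n` short complexes. -/
noncomputable def scIncl (M : SML L) (G₁ G₂ : V → V → L) (t₁ t₂ : L) (n : ℕ)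
    (h : ∀ m, m ≤ n + 1 → ∀ y : Fin (m + 1) → V, memRips M G₁ t₁ y → memRips M G₂ t₂ y) :
    (CC K M G₁ t₁).sc n ⟶ (CC K M G₂ t₂).sc n where
  τ₁ := inclMod K M G₁ G₂ t₁ t₂ _ (h _ (le_of_eq (ChainComplex.prev ℕ n)))
  τ₂ := inclMod K M G₁ G₂ t₁ t₂ n (h n (by omega))
  τ₃ := inclMod K M G₁ G₂ t₁ t₂ _ (h _ (next_le n))
  comm₁₂ := (d_incl K M G₁ G₂ t₁ t₂ _ n _ _).symm
  comm₂₃ := (d_incl K M G₁ G₂ t₁ t₂ n _ _ _).symm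

lemma scIncl_comp (M : SML L) (G₁ G₂ G₃ : V → V → L) (t₁ t₂ t₃ : L) (n : ℕ)
    (h₁ : ∀ m, m ≤ n + 1 → ∀ y : Fin (m + 1) → V, memRips M G₁ t₁ y → memRips M G₂ t₂ y)
    (h₂ : ∀ m, m ≤ n + 1 → ∀ y : Fin (m + 1) → V, memRips M G₂ t₂ y → memRips M G₃ t₃ y) :
    scIncl K M G₁ G₂ t₁ t₂ n h₁ ≫ scIncl K M G₂ G₃ t₂ t₃ n h₂ =
      scIncl K M G₁ G₃ t₁ t₃ n (fun m hm y hy => h₂ m hm y (h₁ m hm y hy)) := by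
  refine ShortComplex.Hom.ext ?_ ?_ ?_
  · rw [ShortComplex.comp_τ₁]; exact inclMod_comp K M G₁ G₂ G₃ t₁ t₂ t₃ _ _ _
  · rw [ShortComplex.comp_τ₂]; exact inclMod_comp K M G₁ G₂ G₃ t₁ t₂ t₃ _ _ _
  · rw [ShortComplex.comp_τ₃]; exact inclMod_comp K M G₁ G₂ G₃ t₁ t₂ t₃ _ _ _

lemma ripsMap_eq (M : SML L) (G : V → V → L) {s t : L} (hle : s ≤ t) (n : ℕ) :
    (ripsPersistence K M G n).map (homOfLE hle) =
      ShortComplex.homologyMap (scIncl K M G G s t n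
        (fun m _ y hy m' α hα => (hy m' α hα).trans hle)) :=
  rfl

end StabilityAux

theorem directed_graph_distance_stability {L : Type} [CompleteLattice L] (D : SDL L)
    (hinf : D.omul.InfPreserving) {V : Type} [Fintype V] [DecidableEq V]
    (G G' : V → V → L) (K : Type) [Field K] (n : ℕ) :
    Interleaved D.omul (ripsPersistence K D.tmul G n) (ripsPersistence K D.tmul G' n)
      (D.tmul.pow (dirDist D.omul G G') (n + 1))
      (D.tmul.pow (dirDist D.omul G' G) (n + 1)) := by
  classical
  refine ⟨fun t => ShortComplex.homologyMap (StabilityAux.scIncl K D.tmul G G' t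
      (D.omul.mul t (D.tmul.pow (dirDist D.omul G G') (n + 1))) n
      (fun m hm y hy => StabilityAux.memRips_incl D hinf G G' t hm y hy)),
    fun t => ShortComplex.homologyMap (StabilityAux.scIncl K D.tmul G' G t
      (D.omul.mul t (D.tmul.pow (dirDist D.omul G' G) (n + 1))) n
      (fun m hm y hy => StabilityAux.memRips_incl D hinf G' G t hm y hy)), ?_, ?_, ?_, ?_⟩
  · intro s t h
    rw [StabilityAux.ripsMap_eq, StabilityAux.ripsMap_eq]
    beta_reduce
    erw [← ShortComplex.homologyMap_comp, ← ShortComplex.homologyMap_comp,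
      StabilityAux.scIncl_comp, StabilityAux.scIncl_comp]
  · intro s t h
    rw [StabilityAux.ripsMap_eq, StabilityAux.ripsMap_eq]
    beta_reduce
    erw [← ShortComplex.homologyMap_comp, ← ShortComplex.homologyMap_comp,
      StabilityAux.scIncl_comp, StabilityAux.scIncl_comp]
  · intro t
    rw [StabilityAux.ripsMap_eq]
    beta_reduce
    erw [← ShortComplex.homologyMap_comp,
      StabilityAux.scIncl_comp]
  · intro t
    rw [StabilityAux.ripsMap_eq]
    beta_reduce
    erw [← ShortComplex.homologyMap_comp,
      StabilityAux.scIncl_comp]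
end

section
/- Let (L, ≤, ⊗, ⊕, e) be a symmetric duoidal lattice such that for every t ∈ L the map c ↦ t ⊕ c preserves arbitrary infima, and let G, G' : V × V → L be L-graphs on a finite set V. Then for every n ≥ 0 the monoidal Rips persistence modules H_n(R^•_⊗(G)) and H_n(R^•_⊗(G')) are δ_⊕(G, G')^{⊗(n+1)}-interleaved with respect to ⊕. -/
open CategoryTheory

/-! ### Auxiliary material for the stability theorem -/

section AuxLattice

variable {L : Type} [CompleteLattice L]

lemma SML.pow_le_pow (M : SML L) (t : L) {k l : ℕ} (h : k ≤ l) :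
    M.pow t k ≤ M.pow t l := by
  induction l with
  | zero => simp_all [SML.pow]
  | succ l ih =>
    rcases Nat.lt_succ_iff_lt_or_eq.1 (Nat.lt_succ_of_le h) with h' | rfl
    · refine (ih (Nat.lt_succ_iff.1 h')).trans ?_
      show M.pow t l ≤ M.mul t (M.pow t l)
      rw [M.mul_comm]
      exact M.le_mul _ _
    · rfl

lemma SML.le_mul_lam (M : SML L) (hinf : M.InfPreserving) (t s : L) :
    s ≤ M.mul t (M.lam t s) := by
  rw [SML.lam, hinf]
  exact le_iInf₂ fun c hc => hc

lemma prodList_le_omul (D : SDL L) (δ : L) {l l' : List L}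
    (h : List.Forall₂ (fun a b => b ≤ D.omul.mul a δ) l l') :
    D.tmul.prodList l' ≤ D.omul.mul (D.tmul.prodList l) (D.tmul.pow δ l.length) := by
  induction h with
  | nil => exact bot_le
  | @cons a b l₁ l₂ hab htail ih =>
    show D.tmul.mul b (D.tmul.prodList l₂) ≤ _
    exact le_trans (D.tmul.mul_mono hab ih)
      (D.duoidal a δ (D.tmul.prodList l₁) (D.tmul.pow δ l₁.length))

end AuxLattice

section Jumps

variable {V : Type} [DecidableEq V]

/-- The number of indices `i` with `y i ≠ y (i+1)`. -/
def jumpcount {m : ℕ} (y : Fin (m + 1) → V) : ℕ :=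
  (Finset.univ.filter fun i : Fin m => y i.castSucc ≠ y i.succ).card

lemma jumpcount_le {m : ℕ} (y : Fin (m + 1) → V) : jumpcount y ≤ m :=
  (Finset.card_filter_le _ _).trans (by simp)

lemma exists_jump_nat (f : ℕ → V) : ∀ (b a : ℕ), a ≤ b → f a ≠ f b →
    ∃ j, a ≤ j ∧ j < b ∧ f j ≠ f (j + 1) := by
  intro b
  induction b with
  | zero => intro a ha hne; interval_cases a; simp at hne
  | succ b ih =>
    intro a ha hne
    rcases Nat.lt_succ_iff_lt_or_eq.1 (Nat.lt_succ_of_le ha) with h' | rfl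
    · have hab : a ≤ b := Nat.lt_succ_iff.1 h'
      by_cases hfb : f a = f b
      · exact ⟨b, hab, Nat.lt_succ_self b, fun h => hne (hfb.trans h)⟩
      · obtain ⟨j, h1, h2, h3⟩ := ih a hab hfb
        exact ⟨j, h1, h2.trans (Nat.lt_succ_self b), h3⟩
    · simp at hne

lemma exists_jump {q : ℕ} (y : Fin (q + 1) → V) (a b : Fin (q + 1)) (hab : a ≤ b)
    (hne : y a ≠ y b) :
    ∃ j : Fin q, a ≤ j.castSucc ∧ j.succ ≤ b ∧ y j.castSucc ≠ y j.succ := by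
  set f : ℕ → V := fun k => y ⟨min k q, Nat.lt_succ_of_le (min_le_right _ _)⟩ with hf
  have key : ∀ c : Fin (q+1), f c.1 = y c := by
    intro c
    simp only [hf]
    congr 1
    exact Fin.ext (min_eq_left (Nat.lt_succ_iff.1 c.2))
  obtain ⟨j, h1, h2, h3⟩ := exists_jump_nat f b.1 a.1 hab (by rw [key a, key b]; exact hne)
  have hjq : j < q := lt_of_lt_of_le h2 (Nat.lt_succ_iff.1 b.2)
  refine ⟨⟨j, hjq⟩, h1, h2, ?_⟩
  have e1 : f j = y (Fin.castSucc ⟨j, hjq⟩) := key ⟨j, Nat.lt_succ_of_lt hjq⟩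
  have e2 : f (j+1) = y (Fin.succ ⟨j, hjq⟩) := key ⟨j+1, Nat.succ_lt_succ hjq⟩
  rw [← e1, ← e2]
  exact h3

lemma jumpcount_comp_le {m q : ℕ} (y : Fin (q + 1) → V) (α : Fin (m + 1) → Fin (q + 1))
    (hα : Monotone α) : jumpcount (y ∘ α) ≤ jumpcount y := by
  rcases q with _ | q
  · have : jumpcount (y ∘ α) = 0 := by
      simp only [jumpcount, Finset.card_eq_zero, Finset.filter_eq_empty_iff]
      intro i _
      have e : α i.castSucc = α i.succ := by
        have h1 := (α i.castSucc).2
        have h2 := (α i.succ).2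
        exact Fin.ext (by omega)
      simp [Function.comp, e]
    simp [this]
  · unfold jumpcount
    have hcs : ∀ i : Fin m, α i.castSucc ≤ α i.succ := fun i => (hα (Fin.castSucc_lt_succ (i := i)).le)
    set f : Fin m → Fin (q + 1) := fun i =>
      if h : y (α i.castSucc) ≠ y (α i.succ) then
        (exists_jump y (α i.castSucc) (α i.succ) (hcs i) h).choose
      else ⟨0, Nat.succ_pos q⟩ with hfdef
    have hfeq : ∀ (i : Fin m) (h : y (α i.castSucc) ≠ y (α i.succ)),
        f i = (exists_jump y (α i.castSucc) (α i.succ) (hcs i) h).choose := by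
      intro i h
      rw [hfdef]
      exact dif_pos h
    apply Finset.card_le_card_of_injOn f
    · intro i hi
      rw [Finset.mem_coe, Finset.mem_filter] at hi ⊢
      have hi' : y (α i.castSucc) ≠ y (α i.succ) := hi.2
      obtain ⟨_, _, h3⟩ := (exists_jump y (α i.castSucc) (α i.succ) (hcs i) hi').choose_spec
      refine ⟨Finset.mem_univ _, ?_⟩
      rw [hfeq i hi']
      exact h3
    · intro i₁ hi₁ i₂ hi₂ hf
      simp only [Finset.coe_filter, Set.mem_setOf_eq, Finset.mem_univ, true_and,
        Function.comp] at hi₁ hi₂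
      by_contra hne
      have key : ∀ j₁ j₂ : Fin m, (h₁ : y (α j₁.castSucc) ≠ y (α j₁.succ)) →
          (h₂ : y (α j₂.castSucc) ≠ y (α j₂.succ)) → j₁ < j₂ → f j₁ ≠ f j₂ := by
        intro j₁ j₂ h₁ h₂ hlt heq
        obtain ⟨_, hs1, _⟩ := (exists_jump y (α j₁.castSucc) (α j₁.succ) (hcs j₁) h₁).choose_spec
        obtain ⟨hs2, _, _⟩ := (exists_jump y (α j₂.castSucc) (α j₂.succ) (hcs j₂) h₂).choose_spec
        have hmid : α j₁.succ ≤ α j₂.castSucc := hα (by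
          rw [Fin.le_def, Fin.val_succ, Fin.coe_castSucc]
          exact Fin.lt_def.1 hlt)
        have hle : (f j₁).succ ≤ (f j₂).castSucc := by
          rw [hfeq j₁ h₁, hfeq j₂ h₂]
          exact le_trans hs1 (le_trans hmid hs2)
        rw [heq] at hle
        rw [Fin.le_def, Fin.val_succ, Fin.coe_castSucc] at hle
        omega
      rcases Ne.lt_or_gt hne with hlt | hlt
      · exact key i₁ i₂ hi₁ hi₂ hlt hf
      · exact key i₂ i₁ hi₂ hi₁ hlt hf.symm

end Jumps

section WeightBound

variable {L : Type} [CompleteLattice L] {V : Type} [DecidableEq V]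

lemma weight_le_omul (D : SDL L) (G G' : V → V → L) (δ : L)
    (hedge : ∀ v w, G' v w ≤ D.omul.mul (G v w) δ) {nb : ℕ} (hnb : 1 ≤ nb) {m : ℕ}
    (y : Fin (m + 1) → V) (hj : jumpcount y ≤ nb) {t : L} (hw : weight D.tmul G y ≤ t) :
    weight D.tmul G' y ≤ D.omul.mul t (D.tmul.pow δ nb) := by
  have hδ : δ ≤ D.tmul.pow δ nb := by
    have h1 : D.tmul.pow δ 1 = δ := by
      show D.tmul.mul δ ⊥ = δ
      exact D.tmul.mul_bot δ
    have h2 := D.tmul.pow_le_pow δ hnb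
    rwa [h1] at h2
  unfold weight at hw ⊢
  by_cases hc : ∀ i, y i = y 0
  · rw [if_pos hc] at hw ⊢
    exact le_trans (hedge _ _) (D.omul.mul_mono hw hδ)
  · rw [if_neg hc] at hw ⊢
    set l := (List.finRange m).filter (fun i : Fin m => y i.castSucc ≠ y i.succ) with hl
    have hf : List.Forall₂ (fun a b => b ≤ D.omul.mul a δ)
        (l.map fun i => G (y i.castSucc) (y i.succ))
        (l.map fun i => G' (y i.castSucc) (y i.succ)) := by
      rw [List.forall₂_map_right_iff, List.forall₂_map_left_iff]
      exact List.forall₂_same.2 fun i _ => hedge _ _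
    refine le_trans (prodList_le_omul D δ hf) (D.omul.mul_mono hw (D.tmul.pow_le_pow δ ?_))
    rw [List.length_map]
    exact le_trans (le_of_eq (rfl : l.length = jumpcount y)) hj

lemma memRips_omul (D : SDL L) (G G' : V → V → L) (δ : L)
    (hedge : ∀ v w, G' v w ≤ D.omul.mul (G v w) δ) (n : ℕ) {t : L} {m : ℕ}
    {y : Fin (m + 1) → V} (hy : memRips D.tmul G t y) (hj : jumpcount y ≤ n + 1) :
    memRips D.tmul G' (D.omul.mul t (D.tmul.pow δ (n + 1))) y := fun p α hα =>
  weight_le_omul D G G' δ hedge (Nat.succ_le_succ (Nat.zero_le n)) _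
    ((jumpcount_comp_le y α hα).trans hj) (hy p α hα)

end WeightBound

section SSetPart

variable {L : Type} [CompleteLattice L] {V : Type} [DecidableEq V]

/-- Truncated monoidal Rips complex: simplices with at most `nb` jumps. -/
def TSSet (M : SML L) (G : V → V → L) (t : L) (nb : ℕ) : SSet.{0} where
  obj k := { y : Fin (k.unop.len + 1) → V // memRips M G t y ∧ jumpcount y ≤ nb }
  map {k k'} α := TypeCat.ofHom fun y => ⟨y.1 ∘ α.unop.toOrderHom, fun m β hβ =>
    y.2.1 m (α.unop.toOrderHom ∘ β) (α.unop.toOrderHom.monotone.comp hβ),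
    (jumpcount_comp_le y.1 _ α.unop.toOrderHom.monotone).trans y.2.2⟩

/-- Canonical map between truncated Rips complexes. -/
def homTT (M : SML L) {G G' : V → V → L} {t t' : L} (nb : ℕ)
    (h : ∀ (m : ℕ) (y : Fin (m + 1) → V),
      memRips M G t y → jumpcount y ≤ nb → memRips M G' t' y) :
    TSSet M G t nb ⟶ TSSet M G' t' nb where
  app k := TypeCat.ofHom fun y => ⟨y.1, h _ y.1 y.2.1 y.2.2, y.2.2⟩

/-- Canonical map from a truncated Rips complex to a Rips complex. -/
def homTR (M : SML L) {G G' : V → V → L} {t t' : L} (nb : ℕ)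
    (h : ∀ (m : ℕ) (y : Fin (m + 1) → V),
      memRips M G t y → jumpcount y ≤ nb → memRips M G' t' y) :
    TSSet M G t nb ⟶ RipsSSet M G' t' where
  app k := TypeCat.ofHom fun y => ⟨y.1, h _ y.1 y.2.1 y.2.2⟩

/-- Canonical map between Rips complexes. -/
def homRR (M : SML L) {G G' : V → V → L} {t t' : L}
    (h : ∀ (m : ℕ) (y : Fin (m + 1) → V), memRips M G t y → memRips M G' t' y) :
    RipsSSet M G t ⟶ RipsSSet M G' t' where
  app k := TypeCat.ofHom fun y => ⟨y.1, h _ y.1 y.2⟩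

end SSetPart

section HomologyIso

open AlgebraicTopology

lemma isIso_homFunctor_map (K : Type) [Field K] (n : ℕ) {X Y : SSet.{0}} (f : X ⟶ Y)
    (h : ∀ m, m ≤ n + 1 → Function.Bijective (f.app (Opposite.op (SimplexCategory.mk m)))) :
    IsIso ((homFunctor K n).map f) := by
  set g := ((SimplicialObject.whiskering (Type) (ModuleCat.{0} K)).obj (ModuleCat.free K)).map f
    with hg
  set c := (alternatingFaceMapComplex (ModuleCat.{0} K)).map g with hcdef
  have hc : ∀ m, m ≤ n + 1 → IsIso (c.f m) := by
    intro m hm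
    haveI : IsIso (f.app (Opposite.op (SimplexCategory.mk m))) :=
      (CategoryTheory.isIso_iff_bijective _).2 (h m hm)
    have e : c.f m = (ModuleCat.free K).map (f.app (Opposite.op (SimplexCategory.mk m))) := by
      rw [hcdef, alternatingFaceMapComplex_map_f, hg]
      rfl
    rw [e]
    exact Functor.map_isIso _ _
  have h1 : IsIso (HomologicalComplex.homologyMap c n) := by
    have e : HomologicalComplex.homologyMap c n = ShortComplex.homologyMap
        ((HomologicalComplex.shortComplexFunctor (ModuleCat.{0} K) (ComplexShape.down ℕ) n).map c) :=
      rfl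
    rw [e]
    haveI h1 : IsIso ((HomologicalComplex.shortComplexFunctor (ModuleCat.{0} K)
        (ComplexShape.down ℕ) n).map c).τ₁ := by
      show IsIso (c.f ((ComplexShape.down ℕ).prev n))
      have e1 : (ComplexShape.down ℕ).prev n = n + 1 := by simp
      rw [e1]
      exact hc (n + 1) le_rfl
    haveI h2 : IsIso ((HomologicalComplex.shortComplexFunctor (ModuleCat.{0} K)
        (ComplexShape.down ℕ) n).map c).τ₂ := by
      show IsIso (c.f n)
      exact hc n (Nat.le_succ n)
    haveI h3 : IsIso ((HomologicalComplex.shortComplexFunctor (ModuleCat.{0} K)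
        (ComplexShape.down ℕ) n).map c).τ₃ := by
      show IsIso (c.f ((ComplexShape.down ℕ).next n))
      rcases n with _ | n
      · rw [ChainComplex.next_nat_zero]
        exact hc 0 (by omega)
      · rw [ChainComplex.next_nat_succ]
        exact hc n (by omega)
    haveI := ShortComplex.isIso_of_isIso
      ((HomologicalComplex.shortComplexFunctor (ModuleCat.{0} K) (ComplexShape.down ℕ) n).map c)
    exact ShortComplex.isIso_homologyMap_of_isIso _
  exact h1

end HomologyIso

section Assembly

variable {L : Type} [CompleteLattice L] {V : Type} [DecidableEq V]

/-- Inclusion of the truncated Rips complex into the Rips complex. -/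
def ιT (M : SML L) (G : V → V → L) (n : ℕ) (t : L) : TSSet M G t (n + 1) ⟶ RipsSSet M G t :=
  homTR M (n + 1) fun _ _ hy _ => hy

/-- Filtration inclusion for truncated Rips complexes. -/
def incTT (M : SML L) (G : V → V → L) (n : ℕ) {s t : L} (h : s ≤ t) :
    TSSet M G s (n + 1) ⟶ TSSet M G t (n + 1) :=
  homTT M (n + 1) fun _ _ hy _ p α hα => le_trans (hy p α hα) h

/-- Filtration inclusion for Rips complexes. -/
def incRR (M : SML L) (G : V → V → L) {s t : L} (h : s ≤ t) :
    RipsSSet M G s ⟶ RipsSSet M G t :=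
  homRR M fun _ _ hy p α hα => le_trans (hy p α hα) h

/-- Interleaving map at the level of truncated Rips complexes. -/
def crTT (D : SDL L) (G G' : V → V → L) (δ : L)
    (h1 : ∀ v w, G' v w ≤ D.omul.mul (G v w) δ) (n : ℕ) (t : L) :
    TSSet D.tmul G t (n + 1) ⟶
      TSSet D.tmul G' (D.omul.mul t (D.tmul.pow δ (n + 1))) (n + 1) :=
  homTT D.tmul (n + 1) fun _ _ hy hj => memRips_omul D G G' δ h1 n hy hj

/-- Interleaving map from the truncated Rips complex to the shifted Rips complex. -/
def crTR (D : SDL L) (G G' : V → V → L) (δ : L)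
    (h1 : ∀ v w, G' v w ≤ D.omul.mul (G v w) δ) (n : ℕ) (t : L) :
    TSSet D.tmul G t (n + 1) ⟶ RipsSSet D.tmul G' (D.omul.mul t (D.tmul.pow δ (n + 1))) :=
  homTR D.tmul (n + 1) fun _ _ hy hj => memRips_omul D G G' δ h1 n hy hj

lemma isIso_ιT (M : SML L) (G : V → V → L) (K : Type) [Field K] (n : ℕ) (t : L) :
    IsIso ((homFunctor K n).map (ιT M G n t)) := by
  apply isIso_homFunctor_map
  intro m hm
  constructor
  · intro a b hab
    have h' := congrArg Subtype.val hab
    exact Subtype.ext h'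
  · intro y
    exact ⟨⟨y.1, y.2, le_trans (jumpcount_le y.1) hm⟩, rfl⟩

/-- The interleaving map on persistence modules. -/
noncomputable def Fint (D : SDL L) (G G' : V → V → L) (δ : L)
    (h1 : ∀ v w, G' v w ≤ D.omul.mul (G v w) δ) (K : Type) [Field K] (n : ℕ) (t : L) :
    (homFunctor K n).obj (RipsSSet D.tmul G t) ⟶
      (homFunctor K n).obj (RipsSSet D.tmul G' (D.omul.mul t (D.tmul.pow δ (n + 1)))) :=
  letI := isIso_ιT D.tmul G K n t
  inv ((homFunctor K n).map (ιT D.tmul G n t)) ≫ (homFunctor K n).map (crTR D G G' δ h1 n t)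

lemma Fint_natural (D : SDL L) (G G' : V → V → L) (δ : L)
    (h1 : ∀ v w, G' v w ≤ D.omul.mul (G v w) δ) (K : Type) [Field K] (n : ℕ)
    {s t : L} (h : s ≤ t) :
    (homFunctor K n).map (incRR D.tmul G h) ≫ Fint D G G' δ h1 K n t
      = Fint D G G' δ h1 K n s ≫ (homFunctor K n).map
          (incRR D.tmul G' (D.omul.mul_mono h (le_refl (D.tmul.pow δ (n + 1))))) := by
  letI := isIso_ιT D.tmul G K n s
  letI := isIso_ιT D.tmul G K n t
  unfold Fint
  rw [← cancel_epi ((homFunctor K n).map (ιT D.tmul G n s))]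
  simp only [Category.assoc, IsIso.hom_inv_id_assoc]
  rw [← Functor.map_comp_assoc]
  have e1 : ιT D.tmul G n s ≫ incRR D.tmul G h = incTT D.tmul G n h ≫ ιT D.tmul G n t := rfl
  rw [e1, Functor.map_comp_assoc]
  simp only [IsIso.hom_inv_id_assoc]
  rw [← Functor.map_comp, ← Functor.map_comp]
  rfl

lemma Fint_comp (D : SDL L) (G G' : V → V → L) (δ : L)
    (h1 : ∀ v w, G' v w ≤ D.omul.mul (G v w) δ)
    (h2 : ∀ v w, G v w ≤ D.omul.mul (G' v w) δ) (K : Type) [Field K] (n : ℕ) (t : L) :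
    Fint D G G' δ h1 K n t ≫ Fint D G' G δ h2 K n (D.omul.mul t (D.tmul.pow δ (n + 1)))
      = (homFunctor K n).map (incRR D.tmul G
          ((D.omul.le_mul t (D.tmul.pow δ (n + 1))).trans
            (D.omul.le_mul _ (D.tmul.pow δ (n + 1))))) := by
  letI := isIso_ιT D.tmul G K n t
  letI := isIso_ιT D.tmul G' K n (D.omul.mul t (D.tmul.pow δ (n + 1)))
  unfold Fint
  have e1 : crTR D G G' δ h1 n t
      = crTT D G G' δ h1 n t ≫ ιT D.tmul G' n (D.omul.mul t (D.tmul.pow δ (n + 1))) := rfl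
  rw [e1, Functor.map_comp]
  simp only [Category.assoc, IsIso.hom_inv_id_assoc]
  rw [← Functor.map_comp]
  have e2 : crTT D G G' δ h1 n t ≫ crTR D G' G δ h2 n (D.omul.mul t (D.tmul.pow δ (n + 1)))
      = ιT D.tmul G n t ≫ incRR D.tmul G
          ((D.omul.le_mul t (D.tmul.pow δ (n + 1))).trans
            (D.omul.le_mul _ (D.tmul.pow δ (n + 1)))) := rfl
  rw [e2, Functor.map_comp, IsIso.inv_hom_id_assoc]

theorem interleaved_of_hedge (D : SDL L) (G G' : V → V → L) (δ : L)
    (h1 : ∀ v w, G' v w ≤ D.omul.mul (G v w) δ)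
    (h2 : ∀ v w, G v w ≤ D.omul.mul (G' v w) δ) (K : Type) [Field K] (n : ℕ) :
    Interleaved D.omul (ripsPersistence K D.tmul G n) (ripsPersistence K D.tmul G' n)
      (D.tmul.pow δ (n + 1)) (D.tmul.pow δ (n + 1)) := by
  refine ⟨Fint D G G' δ h1 K n, Fint D G' G δ h2 K n, ?_, ?_, ?_, ?_⟩
  · intro s t h
    exact Fint_natural D G G' δ h1 K n h
  · intro s t h
    exact Fint_natural D G' G δ h2 K n h
  · intro t
    exact Fint_comp D G G' δ h1 h2 K n t
  · intro t
    exact Fint_comp D G' G δ h2 h1 K n t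

end Assembly

/-- Graph Distance Stability: Let `(L, ≤, ⊗, ⊕, e)` be a symmetric duoidal
lattice such that every map `c ↦ t ⊕ c` preserves arbitrary infima, and let `G, G'` be
`L`-graphs on a finite set `V`. Then for every `n ≥ 0`, the monoidal Rips persistence
modules `H_n(R^•_⊗(G))` and `H_n(R^•_⊗(G'))` are `δ_⊕(G, G')^{⊗(n+1)}`-interleaved with
respect to `⊕`. -/
theorem graph_distance_stability {L : Type} [CompleteLattice L] (D : SDL L)
    (hinf : D.omul.InfPreserving) {V : Type} [Fintype V] [DecidableEq V]
    (G G' : V → V → L) (K : Type) [Field K] (n : ℕ) :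
    Interleaved D.omul (ripsPersistence K D.tmul G n) (ripsPersistence K D.tmul G' n)
      (D.tmul.pow (graphDist D.omul G G') (n + 1))
      (D.tmul.pow (graphDist D.omul G G') (n + 1)) := by
  have h1 : ∀ v w, G' v w ≤ D.omul.mul (G v w) (graphDist D.omul G G') := by
    intro v w
    refine le_trans (D.omul.le_mul_lam hinf (G v w) (G' v w)) (D.omul.mul_mono le_rfl ?_)
    refine le_trans ?_ (le_sup_left (b := dirDist D.omul G' G))
    exact le_iSup_of_le v (le_iSup (fun v' => D.omul.lam (G v v') (G' v v')) w)
  have h2 : ∀ v w, G v w ≤ D.omul.mul (G' v w) (graphDist D.omul G G') := by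
    intro v w
    refine le_trans (D.omul.le_mul_lam hinf (G' v w) (G v w)) (D.omul.mul_mono le_rfl ?_)
    refine le_trans ?_ (le_sup_right (a := dirDist D.omul G G'))
    exact le_iSup_of_le v (le_iSup (fun v' => D.omul.lam (G' v v') (G v v')) w)
  exact interleaved_of_hedge D G G' (graphDist D.omul G G') h1 h2 K n
end

section
/- Let (V, d) be a finite extended metric space, let γ : V → [0, ∞] be a function, and consider the symmetric monoidal lattice ([0, ∞]² , ≤, ⊗, (0,0)) with the product order and ⊗ given by coordinatewise maximum. Define the graph G_γ : V × V → [0, ∞]² by G_γ(v, v') = (d(v, v'), γ(v)). Then for all t, s ∈ [0, ∞], every n ≥ 0, and every tuple y = (v₀, …, v_n) ∈ V^{n+1}: y ∈ R^{(t,s)}_⊗(G_γ)_n if and only if d(v_i, v_j) ≤ t and γ(v_i) ≤ s for all i, j ∈ {0, …, n}. Equivalently, R^{(t,s)}_⊗(G_γ) equals the simplicial set Sing(Rips^↑(γ)_{t,s}) of tuples whose underlying vertex set is a simplex of the sublevel Rips complex Rips(γ^{-1}[0, s])_t. -/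
open CategoryTheory

open scoped ENNReal

/-- The symmetric monoidal lattice `([0,∞]², ≤, ⊗, (0,0))` with the product order and
`⊗` given by coordinatewise maximum (i.e., the lattice supremum of the product). -/
def supSML2 : SML (ℝ≥0∞ × ℝ≥0∞) where
  mul a b := a ⊔ b
  mul_comm a b := sup_comm a b
  mul_assoc a b c := sup_assoc a b c
  mul_bot a := sup_bot_eq a
  mul_mono := fun _ _ _ _ h h' => sup_le_sup h h'

lemma supSML2_prodList_le (l : List (ℝ≥0∞ × ℝ≥0∞)) (c : ℝ≥0∞ × ℝ≥0∞)
    (h : ∀ a ∈ l, a ≤ c) : supSML2.prodList l ≤ c := by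
  induction l with
  | nil => exact bot_le
  | cons a l ih =>
      exact sup_le (h a List.mem_cons_self)
        (ih fun b hb => h b (List.mem_cons_of_mem a hb))

/-- Let `(V, d)` be a finite extended metric space, `γ : V → [0, ∞]` a
function, and `G_γ(v, v') = (d(v, v'), γ(v))`, a graph valued in `[0, ∞]²` with the
product order and `⊗` = coordinatewise maximum. Then a tuple `y = (v₀, …, v_n)` is a
simplex of `R^{(t,s)}_⊗(G_γ)` if and only if `d(v_i, v_j) ≤ t` for all `i, j` and
`γ(v_i) ≤ s` for all `i`; that is, `R^{(t,s)}_⊗(G_γ)` is the simplicial set of tuples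
whose underlying vertex set is a simplex of the sublevel Rips complex
`Rips(γ⁻¹[0, s])_t`. -/
theorem sublevel_rips_bifiltration {V : Type} [Fintype V] [DecidableEq V]
    (d : V → V → ℝ≥0∞)
    (hsymm : ∀ v v', d v v' = d v' v)
    (htri : ∀ u v w, d u w ≤ d u v + d v w)
    (hzero : ∀ v v', d v v' = 0 ↔ v = v')
    (γ : V → ℝ≥0∞) (t s : ℝ≥0∞) (n : ℕ) (y : Fin (n + 1) → V) :
    memRips supSML2 (fun v v' => (d v v', γ v)) (t, s) y ↔
      (∀ i j, d (y i) (y j) ≤ t) ∧ (∀ i, γ (y i) ≤ s) := by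
  constructor
  · intro h
    have hγ : ∀ i, γ (y i) ≤ s := by
      intro i
      have := h 0 (fun _ => i) (fun _ _ _ => le_rfl)
      simp [weight, Prod.le_def] at this
      exact this.2
    have key : ∀ i j : Fin (n + 1), i ≤ j → d (y i) (y j) ≤ t := by
      intro i j hij
      by_cases heq : y i = y j
      · rw [heq, (hzero _ _).mpr rfl]; exact zero_le
      · have hmono : Monotone (![i, j] : Fin 2 → Fin (n + 1)) := by
          intro a b hab
          fin_cases a <;> fin_cases b <;> simp_all <;> omega
        have := h 1 ![i, j] hmono
        simp only [weight] at this
        rw [if_neg] at this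
        · have hfr : List.finRange 1 = [(0 : Fin 1)] := by decide
          have hlist : ((List.finRange 1).filter fun k : Fin 1 =>
              decide ((y ∘ ![i, j]) k.castSucc ≠ (y ∘ ![i, j]) k.succ)) = [0] := by
            rw [hfr, List.filter_cons, List.filter_nil]
            simp [heq, Fin.succ_zero_eq_one]
          rw [hlist] at this
          simp only [List.map_cons, List.map_nil, SML.prodList] at this
          have : ((d (y i) (y j), γ (y i)) : ℝ≥0∞ × ℝ≥0∞) ≤ (t, s) := by
            have h2 := this
            simpa [supSML2, SML.prodList, Matrix.cons_val_zero, Matrix.cons_val_one] using h2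
          exact this.1
        · intro hall
          have := hall 1
          simp [Matrix.cons_val_one, Matrix.cons_val_zero] at this
          exact heq this.symm
    refine ⟨fun i j => ?_, hγ⟩
    rcases le_total i j with hij | hij
    · exact key i j hij
    · rw [hsymm]; exact key j i hij
  · rintro ⟨hd, hγ⟩ m α hα
    simp only [weight]
    split
    · exact ⟨by simpa using le_trans (le_of_eq ((hzero _ _).mpr rfl)) (zero_le : (0 : ℝ≥0∞) ≤ t), hγ _⟩
    · apply supSML2_prodList_le
      intro a ha
      simp only [List.mem_map, List.mem_filter] at ha
      obtain ⟨k, -, rfl⟩ := ha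
      exact ⟨hd _ _, hγ _⟩
end
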